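/- Let (γ, T, N, B, κ, τ) be a framed curve in ℝ³ parametrized by arclength with κ of class C² and τ of class C¹, such that κ(s) ≠ 0 and τ(s) ≠ 0 for all s. If γ lies on a sphere, i.e., there exist c ∈ ℝ³ and r > 0 with ‖γ(s) − c‖ = r for all s, then the curvature and torsion satisfy the differential equation τ(s)/κ(s) − d/ds( κ'(s) / (κ(s)²·τ(s)) ) = 0 for all s. -/

import Mathlib

open scoped RealInnerProductSpace

/-- The cross product of two vectors in Euclidean 3-space. -/
noncomputable def cross3 (u v : EuclideanSpace ℝ (Fin 3)) : EuclideanSpace ℝ (Fin 3) :=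
  WithLp.toLp 2 ![u 1 * v 2 - u 2 * v 1, u 2 * v 0 - u 0 * v 2, u 0 * v 1 - u 1 * v 0]

/-- A framed curve in ℝ³, parametrized by arclength, on the parameter set `I`:
the maps `T`, `N`, `B` form a positively oriented orthonormal frame at each `s ∈ I`,
`κ` and `τ` are continuous on `I`, and the Frenet equations
`γ' = T`, `T' = κ·N`, `N' = −κ·T + τ·B`, `B' = −τ·N` hold on `I`. -/
structure FramedCurveOn (γ T N B : ℝ → EuclideanSpace ℝ (Fin 3)) (κ τ : ℝ → ℝ)
    (I : Set ℝ) : Prop where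
  contκ : ContinuousOn κ I
  contτ : ContinuousOn τ I
  unitT : ∀ s ∈ I, ‖T s‖ = 1
  unitN : ∀ s ∈ I, ‖N s‖ = 1
  unitB : ∀ s ∈ I, ‖B s‖ = 1
  orthoTN : ∀ s ∈ I, ⟪T s, N s⟫ = (0 : ℝ)
  orthoTB : ∀ s ∈ I, ⟪T s, B s⟫ = (0 : ℝ)
  orthoNB : ∀ s ∈ I, ⟪N s, B s⟫ = (0 : ℝ)
  oriented : ∀ s ∈ I, B s = cross3 (T s) (N s)
  derivγ : ∀ s ∈ I, HasDerivWithinAt γ (T s) I s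
  derivT : ∀ s ∈ I, HasDerivWithinAt T (κ s • N s) I s
  derivN : ∀ s ∈ I, HasDerivWithinAt N ((-κ s) • T s + τ s • B s) I s
  derivB : ∀ s ∈ I, HasDerivWithinAt B ((-τ s) • N s) I s

/-- A closed framed curve in ℝ³ of period `L`: a framed curve defined on all of ℝ,
all of whose data is `L`-periodic. -/
structure ClosedFramedCurve (γ T N B : ℝ → EuclideanSpace ℝ (Fin 3)) (κ τ : ℝ → ℝ)
    (L : ℝ) : Prop where
  framed : FramedCurveOn γ T N B κ τ Set.univ
  periodicγ : Function.Periodic γ L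
  periodicT : Function.Periodic T L
  periodicN : Function.Periodic N L
  periodicB : Function.Periodic B L
  periodicκ : Function.Periodic κ L
  periodicτ : Function.Periodic τ L

/-- A spherical framed curve with nonvanishing curvature of class C² and nonvanishing
torsion of class C¹ satisfies the classical ODE `τ/κ − (κ'/(κ²·τ))' = 0`. -/
theorem spherical_curve_kappa_tau_ode (γ T N B : ℝ → EuclideanSpace ℝ (Fin 3))
    (κ τ : ℝ → ℝ) (h : FramedCurveOn γ T N B κ τ Set.univ)
    (hκC2 : ContDiff ℝ 2 κ) (hτC1 : ContDiff ℝ 1 τ)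
    (hκ0 : ∀ s, κ s ≠ 0) (hτ0 : ∀ s, τ s ≠ 0)
    (c : EuclideanSpace ℝ (Fin 3)) (r : ℝ) (hr : 0 < r)
    (hsphere : ∀ s, ‖γ s - c‖ = r) :
    ∀ s, τ s / κ s - deriv (fun u => deriv κ u / (κ u ^ 2 * τ u)) s = 0 := by
  intro s
  have hγ : ∀ u, HasDerivAt γ (T u) u := fun u =>
    hasDerivWithinAt_univ.mp (h.derivγ u trivial)
  have hT : ∀ u, HasDerivAt T (κ u • N u) u := fun u =>
    hasDerivWithinAt_univ.mp (h.derivT u trivial)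
  have hN : ∀ u, HasDerivAt N ((-κ u) • T u + τ u • B u) u := fun u =>
    hasDerivWithinAt_univ.mp (h.derivN u trivial)
  have hB : ∀ u, HasDerivAt B ((-τ u) • N u) u := fun u =>
    hasDerivWithinAt_univ.mp (h.derivB u trivial)
  have hγc : ∀ u, HasDerivAt (fun v => γ v - c) (T u) u := fun u => (hγ u).sub_const c
  have hTT : ∀ u, ⟪T u, T u⟫ = (1:ℝ) := fun u => by
    rw [real_inner_self_eq_norm_sq, h.unitT u trivial]; norm_num
  have hκd : ∀ u, HasDerivAt κ (deriv κ u) u := fun u =>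
    ((hκC2.differentiable (by norm_num)) u).hasDerivAt
  -- step 1: ⟪γ - c, T⟫ = 0
  have hf0 : ∀ u, ⟪γ u - c, T u⟫ = (0:ℝ) := by
    intro u
    have h1 : HasDerivAt (fun v => ⟪γ v - c, γ v - c⟫) (⟪γ u - c, T u⟫ + ⟪T u, γ u - c⟫) u :=
      (hγc u).inner ℝ (hγc u)
    have h2 : (fun v => ⟪γ v - c, γ v - c⟫) = fun _ => (r^2 : ℝ) := by
      funext v
      rw [real_inner_self_eq_norm_sq, hsphere v]
    rw [h2] at h1
    have h3 := h1.unique (hasDerivAt_const u (r^2))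
    linarith [real_inner_comm (γ u - c) (T u), h3]
  -- step 2: ⟪γ - c, N⟫ = -(κ)⁻¹
  have hg : ∀ u, ⟪γ u - c, N u⟫ = -(κ u)⁻¹ := by
    intro u
    have h1 : HasDerivAt (fun v => ⟪γ v - c, T v⟫)
        (⟪γ u - c, κ u • N u⟫ + ⟪T u, T u⟫) u := (hγc u).inner ℝ (hT u)
    have h2 : (fun v => ⟪γ v - c, T v⟫) = fun _ => (0:ℝ) := funext hf0
    rw [h2] at h1
    have h3 := h1.unique (hasDerivAt_const u 0)
    rw [hTT u, real_inner_smul_right] at h3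
    have hκu := hκ0 u
    have h5 : ⟪γ u - c, N u⟫ = -1 / κ u := by
      rw [eq_div_iff hκu]; linarith
    rw [h5, neg_div, one_div]
  -- step 3: ⟪γ - c, B⟫ = κ' / (κ² τ)
  have hb : ∀ u, ⟪γ u - c, B u⟫ = deriv κ u / (κ u ^ 2 * τ u) := by
    intro u
    have h1 : HasDerivAt (fun v => ⟪γ v - c, N v⟫)
        (⟪γ u - c, (-κ u) • T u + τ u • B u⟫ + ⟪T u, N u⟫) u := (hγc u).inner ℝ (hN u)
    have h2 : (fun v => ⟪γ v - c, N v⟫) = fun v => -(κ v)⁻¹ := funext hg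
    rw [h2] at h1
    have h4 : HasDerivAt (fun v => -(κ v)⁻¹) (deriv κ u / κ u ^ 2) u := by
      have := ((hκd u).inv (hκ0 u)).neg
      exact this.congr_deriv (by ring)
    have h3 := h1.unique h4
    rw [inner_add_right, real_inner_smul_right, real_inner_smul_right, hf0 u,
      h.orthoTN u trivial] at h3
    have h5 : τ u * ⟪γ u - c, B u⟫ = deriv κ u / κ u ^ 2 := by linarith
    rw [eq_div_iff (pow_ne_zero 2 (hκ0 u))] at h5
    rw [eq_div_iff (mul_ne_zero (pow_ne_zero 2 (hκ0 u)) (hτ0 u))]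
    linear_combination h5
  -- step 4: differentiate step 3 result
  have h1 : HasDerivAt (fun v => ⟪γ v - c, B v⟫)
      (⟪γ s - c, (-τ s) • N s⟫ + ⟪T s, B s⟫) s := (hγc s).inner ℝ (hB s)
  have h2 : (fun v => ⟪γ v - c, B v⟫) = fun u => deriv κ u / (κ u ^ 2 * τ u) := funext hb
  rw [h2] at h1
  rw [real_inner_smul_right, hg s, h.orthoTB s trivial] at h1
  rw [h1.deriv]
  have hκs := hκ0 s
  field_simp
  ring
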